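/- The 2-chain t_1 = (1, 3) in C_2^Q(R_4) is a cycle (∂ t_1 = 0) and is not a boundary in the quandle chain complex with Z_2 coefficients; equivalently, its homology class in H_2^Q(R_4; Z_2) is nonzero, as witnessed by the Z_2-valued cocycle χ_{(1,0)} + χ_{(3,0)} + χ_{(1,3)} + χ_{(3,1)} evaluating to 1 on it. -/
import Mathlib


/-- The dihedral quandle operation on `R_4 = ZMod 4`: `i * j = 2j - i`. -/
def dop (i j : ZMod 4) : ZMod 4 := 2 * j - i

/-- Quandle boundary of a basis triple, with `ℤ_2` coefficients. -/
noncomputable def d3single (x y z : ZMod 4) : (ZMod 4 × ZMod 4) →₀ ZMod 2 :=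
  Finsupp.single (x, z) 1 - Finsupp.single (dop x y, z) 1
    - Finsupp.single (x, y) 1 + Finsupp.single (dop x z, dop y z) 1

/-- Linear extension of the boundary to 3-chains with `ℤ_2` coefficients. -/
noncomputable def d3 (w : (ZMod 4 × ZMod 4 × ZMod 4) →₀ ZMod 2) :
    (ZMod 4 × ZMod 4) →₀ ZMod 2 :=
  w.sum fun p n => n • d3single p.1 p.2.1 p.2.2

/-- The degenerate 2-chains with `ℤ_2` coefficients. -/
noncomputable def deg2 : Submodule (ZMod 2) ((ZMod 4 × ZMod 4) →₀ ZMod 2) :=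
  Submodule.span (ZMod 2) {f | ∃ x : ZMod 4, f = Finsupp.single (x, x) 1}

/-- The cocycle `χ_{(1,0)} + χ_{(3,0)} + χ_{(1,3)} + χ_{(3,1)}`. -/
def phi (x y : ZMod 4) : ZMod 2 :=
  (if (x, y) = (1, 0) then 1 else 0) + (if (x, y) = (3, 0) then 1 else 0)
    + (if (x, y) = (1, 3) then 1 else 0) + (if (x, y) = (3, 1) then 1 else 0)

/-- Evaluation of a `ℤ_2`-valued function on a 2-chain. -/
noncomputable def eval (c : (ZMod 4 × ZMod 4) →₀ ZMod 2) : ZMod 2 :=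
  c.sum fun p n => n * phi p.1 p.2

/-- `t_1 = (1,3)`. -/
noncomputable def t1 : (ZMod 4 × ZMod 4) →₀ ZMod 2 := Finsupp.single (1, 3) 1

/-- Linear-map version of `eval`. -/
noncomputable def L : ((ZMod 4 × ZMod 4) →₀ ZMod 2) →ₗ[ZMod 2] ZMod 2 :=
  Finsupp.lsum (ZMod 2) fun p => LinearMap.id.smulRight (phi p.1 p.2)

lemma L_eq_eval (c : (ZMod 4 × ZMod 4) →₀ ZMod 2) : L c = eval c := by
  simp [L, eval, Finsupp.lsum_apply, Finsupp.sum, smul_eq_mul]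

lemma L_single (p : ZMod 4 × ZMod 4) (n : ZMod 2) :
    L (Finsupp.single p n) = n * phi p.1 p.2 := by
  simp [L, smul_eq_mul]

lemma phi_cocycle (x y z : ZMod 4) :
    phi x z - phi (dop x y) z - phi x y + phi (dop x z) (dop y z) = 0 := by
  revert x y z; decide

lemma L_d3single (x y z : ZMod 4) : L (d3single x y z) = 0 := by
  simp only [d3single, map_add, map_sub, L_single, one_mul]
  exact phi_cocycle x y z

lemma L_d3 (w : (ZMod 4 × ZMod 4 × ZMod 4) →₀ ZMod 2) : L (d3 w) = 0 := by
  rw [d3, map_finsuppSum]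
  simp [L_d3single]

lemma L_deg2 {f : (ZMod 4 × ZMod 4) →₀ ZMod 2} (hf : f ∈ deg2) : L f = 0 := by
  induction hf using Submodule.span_induction with
  | mem g hg =>
    obtain ⟨x, rfl⟩ := hg
    have h : phi x x = 0 := by revert x; decide
    simpa [L_single] using h
  | zero => simp
  | add a b _ _ ha hb => simp [ha, hb]
  | smul r a _ ha => simp [ha]

/-- `t_1 = (1,3)` is a cycle (`∂(x,y) = (x) - (x*y)` vanishes on it), it is not a
boundary in the quandle chain complex with `ℤ_2` coefficients, and the cocycle
`χ_{(1,0)} + χ_{(3,0)} + χ_{(1,3)} + χ_{(3,1)}` evaluates to `1` on it; hence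
its class in `H_2^Q(R_4; ℤ_2)` is nonzero. -/
theorem t1_nontrivial_mod_two :
    (Finsupp.single (1 : ZMod 4) (1 : ZMod 2)
        - Finsupp.single (dop 1 3) (1 : ZMod 2) = 0) ∧
    (∀ w : (ZMod 4 × ZMod 4 × ZMod 4) →₀ ZMod 2, t1 - d3 w ∉ deg2) ∧
    eval t1 = 1 := by
  have hdop : dop 1 3 = 1 := by decide
  have ht1 : eval t1 = 1 := by
    rw [← L_eq_eval, t1, L_single]
    decide
  refine ⟨by rw [hdop]; exact sub_self _, ?_, ht1⟩
  intro w hw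
  have := L_deg2 hw
  rw [map_sub, L_d3 w, sub_zero, L_eq_eval, ht1] at this
  exact one_ne_zero this
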